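/- Let u be a real polynomial of degree at most p, and let −1 = a_0 < a_1 < ⋯ < a_n = 1 be a partition of [−1,1] into n subintervals. Suppose that for every i with 0 ≤ i < n and every real polynomial Q of degree at most q, the integral ∫_{a_i}^{a_{i+1}} u(x) Q(x) dx = 0. If n(q+1) ≥ p+1, then u is the zero polynomial. -/

import Mathlib

open MeasureTheory Polynomial


/-- A nonzero real polynomial whose roots in `Ioo c d` all have even
multiplicity does not change sign on `Ioo c d`. -/
lemma sign_aux (c d : ℝ) :
    ∀ N (v : Polynomial ℝ), v.natDegree ≤ N → v ≠ 0 →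
    (∀ z ∈ Set.Ioo c d, v.IsRoot z → Even (v.rootMultiplicity z)) →
    ∀ x ∈ Set.Ioo c d, ∀ y ∈ Set.Ioo c d, 0 ≤ v.eval x * v.eval y := by
  intro N
  induction N with
  | zero =>
    intro v hN hv _ x _ y _
    obtain ⟨k, rfl⟩ : ∃ k, v = C k := ⟨v.coeff 0, eq_C_of_natDegree_le_zero hN⟩
    simpa using mul_self_nonneg k
  | succ N ih =>
    intro v hN hv heven x hx y hy
    by_cases hroot : ∃ z : ℝ, v.IsRoot z
    · obtain ⟨z, hz⟩ := hroot
      set m := v.rootMultiplicity z with hm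
      obtain ⟨w, hw, hndvd⟩ := v.exists_eq_pow_rootMultiplicity_mul_and_not_dvd hv z
      have hw0 : w ≠ 0 := by rintro rfl; simp at hw; exact hv hw
      have hwz : ¬ w.IsRoot z := fun h => hndvd (dvd_iff_isRoot.mpr h)
      have hm1 : 1 ≤ m := (rootMultiplicity_pos hv).mpr hz
      have hdeg : w.natDegree ≤ N := by
        have h1 : v.natDegree = m + w.natDegree := by
          rw [hw, natDegree_mul (pow_ne_zero _ (X_sub_C_ne_zero z)) hw0,
            natDegree_pow, natDegree_X_sub_C, mul_one]
        omega
      have hevenw : ∀ z' ∈ Set.Ioo c d, w.IsRoot z' → Even (w.rootMultiplicity z') := by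
        intro z' hz' hz'w
        have hne : z' ≠ z := fun h => hwz (h ▸ hz'w)
        have hpow : ((X - C z) ^ m).rootMultiplicity z' = 0 := by
          apply rootMultiplicity_eq_zero
          simp only [IsRoot, eval_pow, eval_sub, eval_X, eval_C]
          exact pow_ne_zero _ (sub_ne_zero.mpr hne)
        have hroot' : v.IsRoot z' := by
          rw [hw]; simp [IsRoot, hz'w.eq_zero]
        have := heven z' hz' hroot'
        rwa [hw, rootMultiplicity_mul (hw ▸ hv), ← hm, hpow, zero_add] at this
      have h1 : 0 ≤ w.eval x * w.eval y := ih w hdeg hw0 hevenw x hx y hy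
      have h2 : 0 ≤ (x - z) ^ m * (y - z) ^ m := by
        by_cases hzin : z ∈ Set.Ioo c d
        · have hme : Even m := heven z hzin hz
          exact mul_nonneg (hme.pow_nonneg _) (hme.pow_nonneg _)
        · rw [← mul_pow]
          apply pow_nonneg
          simp only [Set.mem_Ioo, not_and_or, not_lt] at hzin
          obtain hx1 := hx.1; obtain hx2 := hx.2
          obtain hy1 := hy.1; obtain hy2 := hy.2
          rcases hzin with h | h <;> nlinarith
      have hevx : v.eval x = (x - z) ^ m * w.eval x := by rw [hw]; simp [hm]
      have hevy : v.eval y = (y - z) ^ m * w.eval y := by rw [hw]; simp [hm]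
      rw [hevx, hevy]
      nlinarith [h1, h2]
    · push_neg at hroot
      by_contra hneg
      push_neg at hneg
      have h0 : (0:ℝ) ∈ Set.uIcc (v.eval x) (v.eval y) := by
        rcases mul_neg_iff.mp hneg with ⟨h1, h2⟩ | ⟨h1, h2⟩ <;> simp [Set.mem_uIcc]
        · exact Or.inr ⟨le_of_lt h2, le_of_lt h1⟩
        · exact Or.inl ⟨le_of_lt h1, le_of_lt h2⟩
      obtain ⟨z, _, hz⟩ := intermediate_value_uIcc ((Polynomial.continuous v).continuousOn) h0
      exact hroot z hz


lemma zero_on_Ioo (v : Polynomial ℝ) {c d : ℝ} (hcd : c < d)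
    (hnn : ∀ x ∈ Set.Ioo c d, 0 ≤ v.eval x)
    (hI : ∫ x in c..d, v.eval x = 0) : v = 0 := by
  have hcont : Continuous fun x : ℝ => v.eval x := v.continuous
  have hint : ∫ x in Set.Ioo c d, v.eval x = 0 := by
    rw [intervalIntegral.integral_of_le hcd.le, integral_Ioc_eq_integral_Ioo] at hI
    exact hI
  have hIntOn : IntegrableOn (fun x => v.eval x) (Set.Ioo c d) :=
    (hcont.integrableOn_Icc).mono_set Set.Ioo_subset_Icc_self
  have hae : (fun x => v.eval x) =ᵐ[volume.restrict (Set.Ioo c d)] 0 := by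
    rw [← integral_eq_zero_iff_of_nonneg_ae
      ((ae_restrict_iff' measurableSet_Ioo).mpr (ae_of_all _ hnn)) hIntOn]
    exact hint
  have hmeas0 : volume (Set.Ioo c d ∩ {x | v.eval x ≠ 0}) = 0 := by
    have := hae
    rw [Filter.EventuallyEq, ae_iff] at this
    rw [Measure.restrict_apply' measurableSet_Ioo] at this
    simpa [Set.inter_comm] using this
  have hopen : IsOpen (Set.Ioo c d ∩ {x | v.eval x ≠ 0}) :=
    isOpen_Ioo.inter (isOpen_compl_singleton.preimage hcont)
  have hempty := (hopen.measure_eq_zero_iff volume).mp hmeas0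
  have hroots : Set.Ioo c d ⊆ {x | v.IsRoot x} := by
    intro x hx
    by_contra hne
    exact absurd (Set.mem_inter hx hne) (hempty ▸ Set.notMem_empty x)
  exact v.eq_zero_of_infinite_isRoot ((Set.Ioo_infinite hcd).mono hroots)

open Classical in
lemma interval_card (u : Polynomial ℝ) (hu : u ≠ 0) {c d : ℝ} (hcd : c < d) (q : ℕ)
    (hortho : ∀ Q : Polynomial ℝ, Q.natDegree ≤ q →
      ∫ x in c..d, u.eval x * Q.eval x = 0) :
    q + 1 ≤ (u.roots.toFinset.filter
      (fun x => x ∈ Set.Ioo c d ∧ Odd (u.rootMultiplicity x))).card := by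
  classical
  by_contra hlt
  push_neg at hlt
  set S := u.roots.toFinset.filter
      (fun x => x ∈ Set.Ioo c d ∧ Odd (u.rootMultiplicity x)) with hS
  have hScard : S.card ≤ q := by omega
  set Q : Polynomial ℝ := ∏ x ∈ S, (X - C x) with hQ
  have hQ0 : Q ≠ 0 := (monic_prod_of_monic _ _ fun x _ => monic_X_sub_C x).ne_zero
  have hQdeg : Q.natDegree = S.card := by
    rw [hQ, natDegree_prod _ _ (fun x _ => X_sub_C_ne_zero x)]
    simp [natDegree_X_sub_C]
  set v := u * Q with hv
  have hv0 : v ≠ 0 := mul_ne_zero hu hQ0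
  have hrmQ : ∀ z : ℝ, Q.rootMultiplicity z = if z ∈ S then 1 else 0 := by
    intro z
    rw [← count_roots, hQ, roots_prod_X_sub_C S]
    split_ifs with h
    · exact Multiset.count_eq_one_of_mem S.nodup h
    · exact Multiset.count_eq_zero_of_notMem h
  have heven : ∀ z ∈ Set.Ioo c d, v.IsRoot z → Even (v.rootMultiplicity z) := by
    intro z hz hzroot
    have hzu : u.IsRoot z := by
      rcases (by simpa [IsRoot, hv] using hzroot : eval z u = 0 ∨ eval z Q = 0) with h | h
      · exact h
      · have h1 : 0 < Q.rootMultiplicity z := (rootMultiplicity_pos hQ0).mpr h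
        rw [hrmQ z] at h1
        split_ifs at h1 with hzS
        · rw [hS] at hzS
          simp only [Finset.mem_filter, Multiset.mem_toFinset] at hzS
          exact (mem_roots hu).mp hzS.1
        · omega
    rw [hv, rootMultiplicity_mul hv0, hrmQ]
    by_cases hodd : Odd (u.rootMultiplicity z)
    · have hzS : z ∈ S := by
        rw [hS]
        simp only [Finset.mem_filter, Multiset.mem_toFinset]
        exact ⟨(mem_roots hu).mpr hzu, hz, hodd⟩
      rw [if_pos hzS]
      exact hodd.add_one
    · have hzS : z ∉ S := by
        intro h
        rw [hS] at h
        simp only [Finset.mem_filter, Multiset.mem_toFinset] at h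
        exact hodd h.2.2
      rw [if_neg hzS, add_zero]
      exact Nat.not_odd_iff_even.mp hodd
  have hsign := sign_aux c d v.natDegree v le_rfl hv0 heven
  have hI : ∫ x in c..d, v.eval x = 0 := by
    simpa [hv, eval_mul] using hortho Q (hQdeg ▸ hScard)
  by_cases hex : ∃ x0 ∈ Set.Ioo c d, 0 < v.eval x0
  · obtain ⟨x0, hx0, hpos⟩ := hex
    have hnn : ∀ x ∈ Set.Ioo c d, 0 ≤ v.eval x := fun x hx => by
      have := hsign x0 hx0 x hx; nlinarith
    exact hv0 (zero_on_Ioo v hcd hnn hI)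
  · push_neg at hex
    have hnn : ∀ x ∈ Set.Ioo c d, 0 ≤ (-v).eval x := fun x hx => by
      simpa using hex x hx
    have hI' : ∫ x in c..d, (-v).eval x = 0 := by
      simp only [eval_neg]
      rw [intervalIntegral.integral_neg, hI, neg_zero]
    exact hv0 (neg_eq_zero.mp (zero_on_Ioo (-v) hcd hnn hI'))


/-- 1D vanishing lemma: if `u` is a polynomial of degree at most `p`, and on
each subinterval `[a_i, a_{i+1}]` of a partition `−1 = a_0 < ⋯ < a_n = 1` of
`[−1, 1]` the integral of `u · Q` vanishes for every polynomial `Q` of degree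
at most `q`, and `n (q + 1) ≥ p + 1`, then `u = 0`. -/
theorem vanishing_lemma_1d
    (p q n : ℕ) (u : Polynomial ℝ) (hdeg : u.natDegree ≤ p)
    (a : ℕ → ℝ) (ha0 : a 0 = -1) (han : a n = 1)
    (hmono : ∀ i < n, a i < a (i + 1))
    (hortho : ∀ i < n, ∀ Q : Polynomial ℝ, Q.natDegree ≤ q →
      ∫ x in (a i)..(a (i + 1)), Polynomial.eval x u * Polynomial.eval x Q = 0)
    (hnqp : p + 1 ≤ n * (q + 1)) :
    u = 0 := by
  classical
  by_contra hu
  have ham : ∀ j ≤ n, ∀ i ≤ j, a i ≤ a j := by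
    intro j
    induction j with
    | zero => intro _ i hi; simp [Nat.le_zero.mp hi]
    | succ j ih =>
      intro hjn i hi
      rcases Nat.lt_or_ge i (j + 1) with h | h
      · exact (ih (by omega) i (by omega)).trans (hmono j (by omega)).le
      · have : i = j + 1 := by omega
        rw [this]
  set S : ℕ → Finset ℝ := fun i => u.roots.toFinset.filter
      (fun x => x ∈ Set.Ioo (a i) (a (i + 1)) ∧ Odd (u.rootMultiplicity x)) with hSdef
  have hcard : ∀ i ∈ Finset.range n, q + 1 ≤ (S i).card := by
    intro i hi
    rw [Finset.mem_range] at hi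
    exact interval_card u hu (hmono i hi) q (fun Q hQ => hortho i hi Q hQ)
  have hdisj : ∀ i ∈ Finset.range n, ∀ j ∈ Finset.range n, i ≠ j → Disjoint (S i) (S j) := by
    have key : ∀ i j, i < j → j < n → Disjoint (S i) (S j) := by
      intro i j hij hjn
      rw [Finset.disjoint_left]
      intro x hxi hxj
      simp only [hSdef, Finset.mem_filter, Set.mem_Ioo] at hxi hxj
      have h1 : x < a (i + 1) := hxi.2.1.2
      have h2 : a j < x := hxj.2.1.1
      have h3 : a (i + 1) ≤ a j := ham j (le_of_lt hjn) (i + 1) hij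
      linarith
    intro i hi j hj hne
    rw [Finset.mem_range] at hi hj
    rcases Nat.lt_or_ge i j with h | h
    · exact key i j h hj
    · exact (key j i (by omega) hi).symm
  have hbig : n * (q + 1) ≤ ((Finset.range n).biUnion S).card := by
    rw [Finset.card_biUnion hdisj]
    calc n * (q + 1) = ∑ _i ∈ Finset.range n, (q + 1) := by
          simp [mul_comm]
      _ ≤ ∑ i ∈ Finset.range n, (S i).card := Finset.sum_le_sum hcard
  have hsub : (Finset.range n).biUnion S ⊆ u.roots.toFinset := by
    intro x hx
    rw [Finset.mem_biUnion] at hx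
    obtain ⟨i, _, hxi⟩ := hx
    exact Finset.mem_of_mem_filter x hxi
  have hsmall : ((Finset.range n).biUnion S).card ≤ p := by
    calc ((Finset.range n).biUnion S).card ≤ u.roots.toFinset.card :=
          Finset.card_le_card hsub
      _ ≤ Multiset.card u.roots := Multiset.toFinset_card_le _
      _ ≤ u.natDegree := u.card_roots'
      _ ≤ p := hdeg
  omega
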